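/- Under the SU(2)-invariant Cayley ODE system, the functions Q(z₁,z₂,z₃,z₄)·(Im(z₁z₄-z₂z₃))², Re(z₁z₄-z₂z₃)·Im(z₁z₄-z₂z₃), Re(z₁·conj(z₃)+z₂·conj(z₄))·Im(z₁z₄-z₂z₃), and Im(z₁·conj(z₃)+z₂·conj(z₄))·Im(z₁z₄-z₂z₃) are all constant in t. -/

import Mathlib

open Complex ComplexConjugate

noncomputable def w₁ (a b c d : ℂ) : ℂ :=
  a * ((‖a‖ ^ 2 + ‖b‖ ^ 2 + ‖c‖ ^ 2 - ‖d‖ ^ 2 : ℝ) : ℂ)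
    + 2 * (conj (a * d - b * c) + b * c) * conj d
noncomputable def w₂ (a b c d : ℂ) : ℂ :=
  b * ((‖d‖ ^ 2 + ‖a‖ ^ 2 + ‖b‖ ^ 2 - ‖c‖ ^ 2 : ℝ) : ℂ)
    - 2 * (conj (a * d - b * c) - a * d) * conj c
noncomputable def w₃ (a b c d : ℂ) : ℂ :=
  c * ((‖c‖ ^ 2 + ‖d‖ ^ 2 + ‖a‖ ^ 2 - ‖b‖ ^ 2 : ℝ) : ℂ)
    - 2 * (conj (a * d - b * c) - a * d) * conj b
noncomputable def w₄ (a b c d : ℂ) : ℂ :=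
  d * ((‖b‖ ^ 2 + ‖c‖ ^ 2 + ‖d‖ ^ 2 - ‖a‖ ^ 2 : ℝ) : ℂ)
    + 2 * (conj (a * d - b * c) + b * c) * conj a

noncomputable def Sfun (a b c d : ℂ) : ℝ :=
  ‖a‖ ^ 2 + ‖b‖ ^ 2 + ‖c‖ ^ 2 + ‖d‖ ^ 2

lemma keyB (a b c d : ℂ) :
    w₁ a b c d * d + a * w₄ a b c d - (w₂ a b c d * c + b * w₃ a b c d)
      = 2 * (Sfun a b c d : ℂ) * conj (a * d - b * c) := by
  simp only [w₁, w₂, w₃, w₄, Sfun, map_sub, map_add, map_mul, Complex.ofReal_add,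
    Complex.ofReal_sub, Complex.sq_norm, ← Complex.mul_conj, Complex.conj_conj,
    Complex.conj_ofReal]
  ring

lemma keyC (a b c d : ℂ) :
    w₁ a b c d * conj c + a * conj (w₃ a b c d)
      + (w₂ a b c d * conj d + b * conj (w₄ a b c d))
      = 2 * (Sfun a b c d : ℂ) * (a * conj c + b * conj d) := by
  simp only [w₁, w₂, w₃, w₄, Sfun, map_sub, map_add, map_mul, Complex.ofReal_add,
    Complex.ofReal_sub, Complex.sq_norm, ← Complex.mul_conj, Complex.conj_conj,
    Complex.conj_ofReal, map_ofNat]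
  ring

lemma keyE (a b c d : ℂ) :
    w₁ a b c d * conj b + a * conj (w₂ a b c d)
      + (w₃ a b c d * conj d + c * conj (w₄ a b c d))
      = 2 * (Sfun a b c d : ℂ) * (a * conj b + c * conj d) := by
  simp only [w₁, w₂, w₃, w₄, Sfun, map_sub, map_add, map_mul, Complex.ofReal_add,
    Complex.ofReal_sub, Complex.sq_norm, ← Complex.mul_conj, Complex.conj_conj,
    Complex.conj_ofReal, map_ofNat]
  ring

lemma keyD (a b c d : ℂ) :
    w₁ a b c d * conj a + a * conj (w₁ a b c d)
      - (w₂ a b c d * conj b + b * conj (w₂ a b c d))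
      + (w₃ a b c d * conj c + c * conj (w₃ a b c d))
      - (w₄ a b c d * conj d + d * conj (w₄ a b c d))
      = 2 * (Sfun a b c d : ℂ) * (a * conj a - b * conj b + c * conj c - d * conj d) := by
  simp only [w₁, w₂, w₃, w₄, Sfun, map_sub, map_add, map_mul, Complex.ofReal_add,
    Complex.ofReal_sub, Complex.sq_norm, ← Complex.mul_conj, Complex.conj_conj,
    Complex.conj_ofReal, map_ofNat]
  ring

lemma HasDerivAt.cre {f : ℝ → ℂ} {f' : ℂ} {t : ℝ} (h : HasDerivAt f f' t) :
    HasDerivAt (fun u => (f u).re) f'.re t := by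
  exact Complex.reCLM.hasFDerivAt.comp_hasDerivAt t h

lemma HasDerivAt.cim {f : ℝ → ℂ} {f' : ℂ} {t : ℝ} (h : HasDerivAt f f' t) :
    HasDerivAt (fun u => (f u).im) f'.im t := by
  exact Complex.imCLM.hasFDerivAt.comp_hasDerivAt t h

lemma HasDerivAt.cconj {f : ℝ → ℂ} {f' : ℂ} {t : ℝ} (h : HasDerivAt f f' t) :
    HasDerivAt (fun u => conj (f u)) (conj f') t := by
  simpa only [starRingEnd_apply] using h.star

theorem stmt13
    (z₁ z₂ z₃ z₄ : ℝ → ℂ)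
    (h1 : ∀ t, HasDerivAt z₁
      (z₁ t * ((‖z₁ t‖ ^ 2 + ‖z₂ t‖ ^ 2
          + ‖z₃ t‖ ^ 2 - ‖z₄ t‖ ^ 2 : ℝ) : ℂ)
        + 2 * (conj (z₁ t * z₄ t - z₂ t * z₃ t) + z₂ t * z₃ t) * conj (z₄ t)) t)
    (h2 : ∀ t, HasDerivAt z₂
      (z₂ t * ((‖z₄ t‖ ^ 2 + ‖z₁ t‖ ^ 2
          + ‖z₂ t‖ ^ 2 - ‖z₃ t‖ ^ 2 : ℝ) : ℂ)
        - 2 * (conj (z₁ t * z₄ t - z₂ t * z₃ t) - z₁ t * z₄ t) * conj (z₃ t)) t)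
    (h3 : ∀ t, HasDerivAt z₃
      (z₃ t * ((‖z₃ t‖ ^ 2 + ‖z₄ t‖ ^ 2
          + ‖z₁ t‖ ^ 2 - ‖z₂ t‖ ^ 2 : ℝ) : ℂ)
        - 2 * (conj (z₁ t * z₄ t - z₂ t * z₃ t) - z₁ t * z₄ t) * conj (z₂ t)) t)
    (h4 : ∀ t, HasDerivAt z₄
      (z₄ t * ((‖z₂ t‖ ^ 2 + ‖z₃ t‖ ^ 2
          + ‖z₄ t‖ ^ 2 - ‖z₁ t‖ ^ 2 : ℝ) : ℂ)
        + 2 * (conj (z₁ t * z₄ t - z₂ t * z₃ t) + z₂ t * z₃ t) * conj (z₁ t)) t) :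
    (∀ t, ((‖z₁ t‖ ^ 2 - ‖z₂ t‖ ^ 2
          + ‖z₃ t‖ ^ 2 - ‖z₄ t‖ ^ 2) ^ 2
        + 4 * ‖z₁ t * conj (z₂ t) + z₃ t * conj (z₄ t)‖ ^ 2)
        * (z₁ t * z₄ t - z₂ t * z₃ t).im ^ 2
      = ((‖z₁ 0‖ ^ 2 - ‖z₂ 0‖ ^ 2
          + ‖z₃ 0‖ ^ 2 - ‖z₄ 0‖ ^ 2) ^ 2
        + 4 * ‖z₁ 0 * conj (z₂ 0) + z₃ 0 * conj (z₄ 0)‖ ^ 2)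
        * (z₁ 0 * z₄ 0 - z₂ 0 * z₃ 0).im ^ 2)
    ∧ (∀ t, (z₁ t * z₄ t - z₂ t * z₃ t).re * (z₁ t * z₄ t - z₂ t * z₃ t).im
      = (z₁ 0 * z₄ 0 - z₂ 0 * z₃ 0).re * (z₁ 0 * z₄ 0 - z₂ 0 * z₃ 0).im)
    ∧ (∀ t, (z₁ t * conj (z₃ t) + z₂ t * conj (z₄ t)).re
          * (z₁ t * z₄ t - z₂ t * z₃ t).im
      = (z₁ 0 * conj (z₃ 0) + z₂ 0 * conj (z₄ 0)).re
          * (z₁ 0 * z₄ 0 - z₂ 0 * z₃ 0).im)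
    ∧ (∀ t, (z₁ t * conj (z₃ t) + z₂ t * conj (z₄ t)).im
          * (z₁ t * z₄ t - z₂ t * z₃ t).im
      = (z₁ 0 * conj (z₃ 0) + z₂ 0 * conj (z₄ 0)).im
          * (z₁ 0 * z₄ 0 - z₂ 0 * z₃ 0).im) := by
  have H1 : ∀ t, HasDerivAt z₁ (w₁ (z₁ t) (z₂ t) (z₃ t) (z₄ t)) t := h1
  have H2 : ∀ t, HasDerivAt z₂ (w₂ (z₁ t) (z₂ t) (z₃ t) (z₄ t)) t := h2
  have H3 : ∀ t, HasDerivAt z₃ (w₃ (z₁ t) (z₂ t) (z₃ t) (z₄ t)) t := h3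
  have H4 : ∀ t, HasDerivAt z₄ (w₄ (z₁ t) (z₂ t) (z₃ t) (z₄ t)) t := h4
  set s : ℝ → ℝ := fun t => Sfun (z₁ t) (z₂ t) (z₃ t) (z₄ t) with hs
  -- derivative of B = z₁ z₄ - z₂ z₃
  have hB : ∀ t, HasDerivAt (fun u => z₁ u * z₄ u - z₂ u * z₃ u)
      (2 * (s t : ℂ) * conj (z₁ t * z₄ t - z₂ t * z₃ t)) t := by
    intro t
    have h := ((H1 t).mul (H4 t)).sub ((H2 t).mul (H3 t))
    rwa [keyB] at h
  -- derivative of C = z₁ conj z₃ + z₂ conj z₄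
  have hC : ∀ t, HasDerivAt (fun u => z₁ u * conj (z₃ u) + z₂ u * conj (z₄ u))
      (2 * (s t : ℂ) * (z₁ t * conj (z₃ t) + z₂ t * conj (z₄ t))) t := by
    intro t
    have h := ((H1 t).mul (H3 t).cconj).add ((H2 t).mul (H4 t).cconj)
    rwa [keyC] at h
  -- derivative of E = z₁ conj z₂ + z₃ conj z₄
  have hE : ∀ t, HasDerivAt (fun u => z₁ u * conj (z₂ u) + z₃ u * conj (z₄ u))
      (2 * (s t : ℂ) * (z₁ t * conj (z₂ t) + z₃ t * conj (z₄ t))) t := by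
    intro t
    have h := ((H1 t).mul (H2 t).cconj).add ((H3 t).mul (H4 t).cconj)
    rwa [keyE] at h
  -- real-valued pieces
  have hReB : ∀ t, HasDerivAt (fun u => (z₁ u * z₄ u - z₂ u * z₃ u).re)
      (2 * s t * (z₁ t * z₄ t - z₂ t * z₃ t).re) t := by
    intro t
    have h := (hB t).cre
    convert h using 1
    simp [Complex.mul_re]
  have hImB : ∀ t, HasDerivAt (fun u => (z₁ u * z₄ u - z₂ u * z₃ u).im)
      (-(2 * s t * (z₁ t * z₄ t - z₂ t * z₃ t).im)) t := by
    intro t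
    have h := (hB t).cim
    convert h using 1
    simp [Complex.mul_im]
    ring
  have hReC : ∀ t, HasDerivAt (fun u => (z₁ u * conj (z₃ u) + z₂ u * conj (z₄ u)).re)
      (2 * s t * (z₁ t * conj (z₃ t) + z₂ t * conj (z₄ t)).re) t := by
    intro t
    have h := (hC t).cre
    convert h using 1
    simp [Complex.mul_re]
  have hImC : ∀ t, HasDerivAt (fun u => (z₁ u * conj (z₃ u) + z₂ u * conj (z₄ u)).im)
      (2 * s t * (z₁ t * conj (z₃ t) + z₂ t * conj (z₄ t)).im) t := by
    intro t
    have h := (hC t).cim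
    convert h using 1
    simp [Complex.mul_im]
  -- derivative of D = |z₁|² - |z₂|² + |z₃|² - |z₄|²
  have hD : ∀ t, HasDerivAt (fun u => ‖z₁ u‖ ^ 2 - ‖z₂ u‖ ^ 2
      + ‖z₃ u‖ ^ 2 - ‖z₄ u‖ ^ 2)
      (2 * s t * (‖z₁ t‖ ^ 2 - ‖z₂ t‖ ^ 2
        + ‖z₃ t‖ ^ 2 - ‖z₄ t‖ ^ 2)) t := by
    intro t
    have h := ((((H1 t).mul (H1 t).cconj).sub ((H2 t).mul (H2 t).cconj)).add
      ((H3 t).mul (H3 t).cconj)).sub ((H4 t).mul (H4 t).cconj)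
    rw [keyD] at h
    have h' := h.cre
    have hfun : (fun u => (z₁ u * conj (z₁ u) - z₂ u * conj (z₂ u) + z₃ u * conj (z₃ u)
        - z₄ u * conj (z₄ u)).re)
        = (fun u => ‖z₁ u‖ ^ 2 - ‖z₂ u‖ ^ 2
          + ‖z₃ u‖ ^ 2 - ‖z₄ u‖ ^ 2) := by
      funext u
      simp [Complex.mul_conj, Complex.sq_norm]
    simp only [Pi.mul_apply, Pi.sub_apply, Pi.add_apply] at h'
    rw [hfun] at h'
    convert h' using 1
    simp [Complex.mul_re, Complex.mul_conj, Complex.sq_norm, hs]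
  -- derivative of N = |E|²
  have hN : ∀ t, HasDerivAt
      (fun u => ‖z₁ u * conj (z₂ u) + z₃ u * conj (z₄ u)‖ ^ 2)
      (4 * s t * ‖z₁ t * conj (z₂ t) + z₃ t * conj (z₄ t)‖ ^ 2) t := by
    intro t
    have h := (hE t).mul (hE t).cconj
    have h' := h.cre
    have hfun : (fun u => ((z₁ u * conj (z₂ u) + z₃ u * conj (z₄ u))
        * conj (z₁ u * conj (z₂ u) + z₃ u * conj (z₄ u))).re)
        = (fun u => ‖z₁ u * conj (z₂ u) + z₃ u * conj (z₄ u)‖ ^ 2) := by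
      funext u
      rw [Complex.mul_conj]
      simp [Complex.sq_norm]
    simp only [Pi.mul_apply, Pi.sub_apply, Pi.add_apply] at h'
    rw [hfun] at h'
    convert h' using 1
    rw [show (starRingEnd ℂ) (2 * ((s t : ℝ) : ℂ) * (z₁ t * conj (z₂ t) + z₃ t * conj (z₄ t)))
        = 2 * ((s t : ℝ) : ℂ) * conj (z₁ t * conj (z₂ t) + z₃ t * conj (z₄ t)) from by
      rw [map_mul, map_mul, Complex.conj_ofReal, map_ofNat]]
    have : (2 * (s t : ℂ) * (z₁ t * conj (z₂ t) + z₃ t * conj (z₄ t)))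
        * conj (z₁ t * conj (z₂ t) + z₃ t * conj (z₄ t))
        + (z₁ t * conj (z₂ t) + z₃ t * conj (z₄ t))
        * (2 * (s t : ℂ) * conj (z₁ t * conj (z₂ t) + z₃ t * conj (z₄ t)))
        = 4 * (s t : ℂ) * ((z₁ t * conj (z₂ t) + z₃ t * conj (z₄ t))
          * conj (z₁ t * conj (z₂ t) + z₃ t * conj (z₄ t))) := by ring
    rw [this, Complex.mul_conj]
    simp [Complex.mul_re, Complex.sq_norm, Complex.mul_im]
  -- assemble the four conserved quantities
  refine ⟨?_, ?_, ?_, ?_⟩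
  · -- Q * Im(B)²
    have hG : ∀ t, HasDerivAt (fun u => ((‖z₁ u‖ ^ 2 - ‖z₂ u‖ ^ 2
        + ‖z₃ u‖ ^ 2 - ‖z₄ u‖ ^ 2) ^ 2
        + 4 * ‖z₁ u * conj (z₂ u) + z₃ u * conj (z₄ u)‖ ^ 2)
        * (z₁ u * z₄ u - z₂ u * z₃ u).im ^ 2) 0 t := by
      intro t
      have h := (((hD t).pow 2).add ((hN t).const_mul 4)).mul ((hImB t).pow 2)
      convert h using 1
      any_goals rfl
      simp only [Pi.pow_apply, Pi.add_apply]
      push_cast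
      ring
    intro t
    exact is_const_of_deriv_eq_zero (fun x => (hG x).differentiableAt)
      (fun x => (hG x).deriv) t 0
  · have hG : ∀ t, HasDerivAt (fun u => (z₁ u * z₄ u - z₂ u * z₃ u).re
        * (z₁ u * z₄ u - z₂ u * z₃ u).im) 0 t := by
      intro t
      have h := (hReB t).mul (hImB t)
      convert h using 1
      any_goals rfl
      ring
    intro t
    exact is_const_of_deriv_eq_zero (fun x => (hG x).differentiableAt)
      (fun x => (hG x).deriv) t 0
  · have hG : ∀ t, HasDerivAt (fun u => (z₁ u * conj (z₃ u) + z₂ u * conj (z₄ u)).re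
        * (z₁ u * z₄ u - z₂ u * z₃ u).im) 0 t := by
      intro t
      have h := (hReC t).mul (hImB t)
      convert h using 1
      any_goals rfl
      ring
    intro t
    exact is_const_of_deriv_eq_zero (fun x => (hG x).differentiableAt)
      (fun x => (hG x).deriv) t 0
  · have hG : ∀ t, HasDerivAt (fun u => (z₁ u * conj (z₃ u) + z₂ u * conj (z₄ u)).im
        * (z₁ u * z₄ u - z₂ u * z₃ u).im) 0 t := by
      intro t
      have h := (hImC t).mul (hImB t)
      convert h using 1
      any_goals rfl
      ring
    intro t
    exact is_const_of_deriv_eq_zero (fun x => (hG x).differentiableAt)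
      (fun x => (hG x).deriv) t 0
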